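/- Assume q ≠ 1. Let (τ_{n+1})_{n≥0} be a Jones–Markov trace on the tower (TL_n(q))_{n≥0}, and define ρ_1 := τ_1 and ρ_{n+1} := τ_{n+1} ∘ E_n for n ≥ 1. Then ρ_{n+1}(F_n(h)·T_{σ_n}) = ρ_n(h) and ρ_{n+1}(F_n(h)·T_{σ_n}^{−1}) = ρ_n(h) for all h ∈ TLhat_n(q) and all n ≥ 1, and each ρ_n is invariant under the Dynkin automorphism ψ_n (i.e. ρ_n ∘ ψ_n = ρ_n). -/

import Mathlib

namespace AffineTL

open FreeAlgebra

/-- Cyclic successor on `Fin m`. -/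
def csucc {m : ℕ} (i : Fin m) : Fin m := ⟨(i.val + 1) % m, Nat.mod_lt _ i.pos⟩

/-- The defining relations of the affine Temperley–Lieb algebra `TLhat_m(q)` with `m`
generators (indexed so that `g_{σ_i}` has index `i - 1` and `g_{a_m}` has index `m - 1`).
For `m = 1` the unique generator is set to `0`, so that `TLhat_1(q) ≅ K`. -/
inductive ATLRel {K : Type*} [CommRing K] (q : K) (m : ℕ) :
    FreeAlgebra K (Fin m) → FreeAlgebra K (Fin m) → Prop
  | degen (h : m ≤ 1) (i : Fin m) : ATLRel q m (ι K i) 0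
  | quad (h : 2 ≤ m) (i : Fin m) :
      ATLRel q m (ι K i * ι K i) ((q - 1) • ι K i + algebraMap K _ q)
  | comm (h : 3 ≤ m) (i j : Fin m) (h1 : i ≠ j) (h2 : j ≠ csucc i) (h3 : i ≠ csucc j) :
      ATLRel q m (ι K i * ι K j) (ι K j * ι K i)
  | braid (h : 3 ≤ m) (i : Fin m) :
      ATLRel q m (ι K i * ι K (csucc i) * ι K i) (ι K (csucc i) * ι K i * ι K (csucc i))
  | vrel (h : 3 ≤ m) (i : Fin m) :
      ATLRel q m (ι K i * ι K (csucc i) * ι K i + ι K i * ι K (csucc i) + ι K (csucc i) * ι K i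
        + ι K i + ι K (csucc i) + 1) 0

/-- The affine Temperley–Lieb algebra `TLhat_m(q)` of type `Ã`. -/
abbrev ATL (K : Type*) [CommRing K] (q : K) (m : ℕ) : Type _ := RingQuot (ATLRel q m)

/-- The generators of `TLhat_m(q)`. -/
noncomputable def g {K : Type*} [CommRing K] (q : K) (m : ℕ) (i : Fin m) : ATL K q m :=
  RingQuot.mkAlgHom K (ATLRel q m) (ι K i)

/-- The defining relations of the type `A` Temperley–Lieb algebra `TL_n(q)` with `n`
generators (`g_{σ_i}` has index `i - 1`). -/
inductive TLARel {K : Type*} [CommRing K] (q : K) (n : ℕ) :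
    FreeAlgebra K (Fin n) → FreeAlgebra K (Fin n) → Prop
  | quad (i : Fin n) :
      TLARel q n (ι K i * ι K i) ((q - 1) • ι K i + algebraMap K _ q)
  | comm (i j : Fin n) (h : i.val + 2 ≤ j.val ∨ j.val + 2 ≤ i.val) :
      TLARel q n (ι K i * ι K j) (ι K j * ι K i)
  | braid (i j : Fin n) (h : j.val = i.val + 1) :
      TLARel q n (ι K i * ι K j * ι K i) (ι K j * ι K i * ι K j)
  | vrel (i j : Fin n) (h : j.val = i.val + 1) :
      TLARel q n (ι K i * ι K j * ι K i + ι K i * ι K j + ι K j * ι K i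
        + ι K i + ι K j + 1) 0

/-- The type `A` Temperley–Lieb algebra `TL_n(q)`. -/
abbrev TLA (K : Type*) [CommRing K] (q : K) (n : ℕ) : Type _ := RingQuot (TLARel q n)

/-- The generators of `TL_n(q)`. -/
noncomputable def gA {K : Type*} [CommRing K] (q : K) (n : ℕ) (i : Fin n) : TLA K q n :=
  RingQuot.mkAlgHom K (TLARel q n) (ι K i)

/-- The formal inverse `q⁻¹·(x − (q−1))` of an element satisfying `x² = (q−1)x + q`. -/
noncomputable def qinv {K : Type*} [CommRing K] (q : K) {A : Type*} [Ring A] [Algebra K A]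
    (x : A) : A :=
  Ring.inverse q • (x - algebraMap K A (q - 1))

/-- A trace on a `K`-algebra: a `K`-linear form vanishing on commutators. -/
def IsTrace {K : Type*} [CommRing K] {A : Type*} [Ring A] [Algebra K A]
    (τ : A →ₗ[K] K) : Prop :=
  ∀ x y : A, τ (x * y) = τ (y * x)

/-- The element `G = g_{σ_n}⋯g_{σ_1}·g_{a_{n+1}}` of `TLhat_{n+1}(q)`. -/
noncomputable def bigG {K : Type*} [CommRing K] (q : K) (n : ℕ) : ATL K q (n + 1) :=
  (List.ofFn fun j : Fin n => g q (n + 1) ⟨n - 1 - j.val, by omega⟩).prod *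
    g q (n + 1) (Fin.last n)

/-- The inverse `G⁻¹ = g_{a_{n+1}}⁻¹·g_{σ_1}⁻¹⋯g_{σ_n}⁻¹` of `bigG`. -/
noncomputable def bigGinv {K : Type*} [CommRing K] (q : K) (n : ℕ) : ATL K q (n + 1) :=
  qinv q (g q (n + 1) (Fin.last n)) *
    (List.ofFn fun j : Fin n => qinv q (g q (n + 1) j.castSucc)).prod

end AffineTL

namespace AffineTL

variable {K : Type*} [CommRing K]

----------------------------------------------------------------
-- auxiliary lemmas
----------------------------------------------------------------

variable {K : Type*} [CommRing K]

section qinvlem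

variable (q : K) {A : Type*} [Ring A] [Algebra K A]

lemma quad_mul_qinv (hq : IsUnit q) {x : A}
    (hx : x * x = (q - 1) • x + algebraMap K A q) : x * qinv q x = 1 := by
  rw [qinv, mul_smul_comm, mul_sub, ← Algebra.commutes (q - 1) x, ← Algebra.smul_def, hx,
    add_sub_cancel_left, Algebra.algebraMap_eq_smul_one, smul_smul,
    Ring.inverse_mul_cancel _ hq, one_smul]

lemma quad_qinv_mul (hq : IsUnit q) {x : A}
    (hx : x * x = (q - 1) • x + algebraMap K A q) : qinv q x * x = 1 := by
  rw [qinv, smul_mul_assoc, sub_mul, ← Algebra.smul_def, hx, add_sub_cancel_left,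
    Algebra.algebraMap_eq_smul_one, smul_smul, Ring.inverse_mul_cancel _ hq, one_smul]

lemma Commute.qinv_right {a x : A} (h : Commute a x) : Commute a (qinv q x) :=
  ((h.sub_right (Algebra.commute_algebraMap_right _ a)).smul_right _)

lemma map_qinv {B : Type*} [Ring B] [Algebra K B] (φ : A →ₐ[K] B) (x : A) :
    φ (qinv q x) = qinv q (φ x) := by
  rw [qinv, qinv, map_smul, map_sub, AlgHom.commutes]

end qinvlem

/-- Induction principle for `ATL`. -/
lemma atl_ind (q : K) (m : ℕ) {P : ATL K q m → Prop}
    (halg : ∀ c : K, P (algebraMap K _ c)) (hgen : ∀ i, P (g q m i))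
    (hadd : ∀ x y, P x → P y → P (x + y)) (hmul : ∀ x y, P x → P y → P (x * y)) :
    ∀ x, P x := by
  intro x
  obtain ⟨y, rfl⟩ := RingQuot.mkAlgHom_surjective K (ATLRel q m) x
  refine FreeAlgebra.induction K (Fin m) ?_ ?_ ?_ ?_ y
  · intro r; rw [AlgHom.commutes]; exact halg r
  · intro i; exact hgen i
  · intro a b ha hb; rw [map_mul]; exact hmul _ _ ha hb
  · intro a b ha hb; rw [map_add]; exact hadd _ _ ha hb

/-- `TLhat_1(q) = K`. -/
lemma atl_one_scalar (q : K) : ∀ x : ATL K q 1, ∃ c : K, x = algebraMap K _ c := by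
  refine atl_ind q 1 (fun c => ⟨c, rfl⟩) (fun i => ⟨0, ?_⟩) ?_ ?_
  · rw [map_zero, g, RingQuot.mkAlgHom_rel K (ATLRel.degen le_rfl i), map_zero]
  · rintro x y ⟨c, rfl⟩ ⟨d, rfl⟩; exact ⟨c + d, by rw [map_add]⟩
  · rintro x y ⟨c, rfl⟩ ⟨d, rfl⟩; exact ⟨c * d, by rw [map_mul]⟩

section tla

variable (q : K) (n : ℕ)

lemma tla_quad (i : Fin n) :
    gA q n i * gA q n i = (q - 1) • gA q n i + algebraMap K _ q := by
  rw [gA, ← map_mul, RingQuot.mkAlgHom_rel K (TLARel.quad i), map_add, map_smul,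
    AlgHom.commutes]

lemma tla_comm {i j : Fin n} (h : i.val + 2 ≤ j.val ∨ j.val + 2 ≤ i.val) :
    Commute (gA q n i) (gA q n j) := by
  have := RingQuot.mkAlgHom_rel K (TLARel.comm (q := q) i j h)
  rw [map_mul, map_mul] at this
  exact this

lemma tla_braid {i j : Fin n} (h : j.val = i.val + 1) :
    gA q n i * gA q n j * gA q n i = gA q n j * gA q n i * gA q n j := by
  have := RingQuot.mkAlgHom_rel K (TLARel.braid (q := q) i j h)
  simp only [map_mul] at this
  exact this

end tla


section words

variable (q : K) (n : ℕ)

/-- `gg k = g_{σ_{k+1}}` if in range, else `1`. -/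
noncomputable def gg (k : ℕ) : TLA K q n := if h : k < n then gA q n ⟨k, h⟩ else 1

/-- `VV k = g_{σ_{k+1}}⁻¹` if in range, else `1`. -/
noncomputable def VV (k : ℕ) : TLA K q n := if h : k < n then qinv q (gA q n ⟨k, h⟩) else 1

/-- `PP k = g_{σ_1} ⋯ g_{σ_k}`. -/
noncomputable def PP (k : ℕ) : TLA K q n := (List.ofFn fun i : Fin k => gg q n i.val).prod

/-- `QQ k = g_{σ_2} ⋯ g_{σ_{k+1}}`. -/
noncomputable def QQ (k : ℕ) : TLA K q n := (List.ofFn fun i : Fin k => gg q n (i.val + 1)).prod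

/-- `FF k = g_{σ_k}⁻¹ ⋯ g_{σ_1}⁻¹`. -/
noncomputable def FF (k : ℕ) : TLA K q n := (List.ofFn fun i : Fin k => VV q n (k - 1 - i.val)).prod

variable {q n}

lemma gg_of_lt {k : ℕ} (h : k < n) : gg q n k = gA q n ⟨k, h⟩ := dif_pos h

lemma VV_of_lt {k : ℕ} (h : k < n) : VV q n k = qinv q (gA q n ⟨k, h⟩) := dif_pos h

lemma PP_zero : PP q n 0 = 1 := by simp [PP]

lemma QQ_zero : QQ q n 0 = 1 := by simp [QQ]

lemma FF_zero : FF q n 0 = 1 := by simp [FF]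

lemma PP_succ (k : ℕ) : PP q n (k + 1) = PP q n k * gg q n k := by
  rw [PP, PP, List.ofFn_succ', List.concat_eq_append, List.prod_append, List.prod_cons,
    List.prod_nil, mul_one]
  rfl

lemma QQ_succ (k : ℕ) : QQ q n (k + 1) = QQ q n k * gg q n (k + 1) := by
  rw [QQ, QQ, List.ofFn_succ', List.concat_eq_append, List.prod_append, List.prod_cons,
    List.prod_nil, mul_one]
  rfl

lemma gg_of_ge {k : ℕ} (h : ¬ k < n) : gg q n k = 1 := dif_neg h

lemma VV_of_ge {k : ℕ} (h : ¬ k < n) : VV q n k = 1 := dif_neg h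

lemma FF_succ (k : ℕ) : FF q n (k + 1) = VV q n k * FF q n k := by
  rw [FF, FF, List.ofFn_succ, List.prod_cons]
  have h0 : k + 1 - 1 - ((0 : Fin (k + 1)) : ℕ) = k := by simp
  rw [h0]
  have h1 : (fun i : Fin k => VV q n (k + 1 - 1 - (i.succ : ℕ))) =
      fun i : Fin k => VV q n (k - 1 - (i : ℕ)) := by
    funext i
    congr 1
    rw [Fin.val_succ]
    omega
  rw [h1]

lemma gg_mul_VV (hq : IsUnit q) (k : ℕ) (hk : k < n) : gg q n k * VV q n k = 1 := by
  rw [gg_of_lt hk, VV_of_lt hk]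
  exact quad_mul_qinv q hq (tla_quad q n _)

lemma VV_mul_gg (hq : IsUnit q) (k : ℕ) (hk : k < n) : VV q n k * gg q n k = 1 := by
  rw [gg_of_lt hk, VV_of_lt hk]
  exact quad_qinv_mul q hq (tla_quad q n _)

lemma FF_mul_PP (hq : IsUnit q) : ∀ k, k ≤ n → FF q n k * PP q n k = 1 ∧
    PP q n k * FF q n k = 1 := by
  intro k
  induction k with
  | zero => intro _; rw [PP_zero, FF_zero]; exact ⟨one_mul 1, one_mul 1⟩
  | succ k ih =>
    intro hk
    obtain ⟨h1, h2⟩ := ih (by omega)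
    constructor
    · rw [FF_succ, PP_succ, mul_assoc, ← mul_assoc (FF q n k), h1, one_mul,
        VV_mul_gg hq k (by omega)]
    · rw [FF_succ, PP_succ, mul_assoc, ← mul_assoc (gg q n k), gg_mul_VV hq k (by omega),
        one_mul, h2]

lemma gcomm {k j : ℕ} (h : j + 2 ≤ k) : Commute (gg q n k) (gg q n j) := by
  by_cases hk : k < n
  · by_cases hj : j < n
    · rw [gg_of_lt hk, gg_of_lt hj]
      exact tla_comm q n (Or.inr h)
    · rw [gg_of_ge hj]; exact Commute.one_right _
  · rw [gg_of_ge hk]; exact Commute.one_left _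

lemma gvcomm {k j : ℕ} (h : j + 2 ≤ k) : Commute (gg q n k) (VV q n j) := by
  by_cases hj : j < n
  · rw [VV_of_lt hj]
    by_cases hk : k < n
    · rw [gg_of_lt hk]
      exact Commute.qinv_right q (tla_comm q n (Or.inr h))
    · rw [gg_of_ge hk]; exact Commute.one_left _
  · rw [VV_of_ge hj]; exact Commute.one_right _

lemma gbraid {i : ℕ} (h : i + 1 < n) :
    gg q n i * gg q n (i + 1) * gg q n i = gg q n (i + 1) * gg q n i * gg q n (i + 1) := by
  rw [gg_of_lt h, gg_of_lt (by omega : i < n)]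
  exact tla_braid q n rfl

lemma commute_ofFn_prod {A : Type*} [Monoid A] {k : ℕ} {x : A} {f : Fin k → A}
    (h : ∀ i, Commute x (f i)) : Commute x (List.ofFn f).prod := by
  refine Commute.list_prod_right _ _ fun y hy => ?_
  obtain ⟨i, rfl⟩ := List.mem_ofFn.1 hy
  exact h i

lemma commute_PP {x : TLA K q n} {k : ℕ} (h : ∀ j, j < k → Commute x (gg q n j)) :
    Commute x (PP q n k) :=
  commute_ofFn_prod fun i => h i.val i.isLt

lemma commute_FF {x : TLA K q n} {k : ℕ} (h : ∀ j, j < k → Commute x (VV q n j)) :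
    Commute x (FF q n k) :=
  commute_ofFn_prod fun i => h (k - 1 - i.val) (by omega)


lemma rot : ∀ k i : ℕ, i + 2 ≤ k → k ≤ n →
    gg q n (i + 1) * PP q n k = PP q n k * gg q n i := by
  intro k
  induction k with
  | zero => intro i hi _; omega
  | succ k ih =>
    intro i hi hk
    rcases Nat.lt_or_ge (i + 2) (k + 1) with hlt | hge
    · -- inductive step: i + 2 ≤ k
      rw [PP_succ, ← mul_assoc, ih i (by omega) (by omega), mul_assoc, mul_assoc,
        (gcomm (by omega : i + 2 ≤ k)).eq]
    · -- base case: k + 1 = i + 2, i.e. k = i + 1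
      have hk' : k = i + 1 := by omega
      subst hk'
      have hbase : PP q n (i + 2) = PP q n i * gg q n i * gg q n (i + 1) := by
        rw [PP_succ, PP_succ]
      rw [hbase]
      have hc : Commute (gg q n (i + 1)) (PP q n i) :=
        commute_PP fun j hj => gcomm (by omega : j + 2 ≤ i + 1)
      have hbr' : gg q n (i + 1) * (gg q n i * gg q n (i + 1)) =
          gg q n i * (gg q n (i + 1) * gg q n i) := by
        rw [← mul_assoc, ← mul_assoc]
        exact (gbraid (by omega : i + 1 < n)).symm
      simp only [← mul_assoc]
      rw [hc.eq]
      simp only [mul_assoc]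
      rw [hbr']

lemma PPn_mul_PP : ∀ k : ℕ, k + 1 ≤ n → PP q n n * PP q n k = QQ q n k * PP q n n := by
  intro k
  induction k with
  | zero => intro _; rw [PP_zero, QQ_zero, one_mul, mul_one]
  | succ k ih =>
    intro hk
    rw [PP_succ, QQ_succ, ← mul_assoc, ih (by omega), mul_assoc, mul_assoc,
      rot n k (by omega) le_rfl]

lemma gg0_mul_QQ : ∀ k : ℕ, gg q n 0 * QQ q n k = PP q n (k + 1) := by
  intro k
  induction k with
  | zero => rw [QQ_zero, mul_one, PP_succ, PP_zero, one_mul]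
  | succ k ih =>
    rw [QQ_succ, ← mul_assoc, ih, ← PP_succ]

lemma idI2 (hq : IsUnit q) (hn : 1 ≤ n) :
    (PP q n (n - 1) * gg q n (n - 1) * FF q n (n - 1)) * PP q n n =
      PP q n n * gg q n (n - 1) := by
  have hP : PP q n n = PP q n (n - 1) * gg q n (n - 1) := by
    have h := PP_succ (q := q) (n := n) (n - 1)
    rwa [show n - 1 + 1 = n by omega] at h
  rw [hP, mul_assoc (PP q n (n - 1) * gg q n (n - 1)) (FF q n (n - 1)),
    ← mul_assoc (FF q n (n - 1)), (FF_mul_PP hq (n - 1) (by omega)).1, one_mul]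

lemma idI3 (hq : IsUnit q) (hn : 1 ≤ n) :
    gg q n 0 * PP q n n =
      PP q n n * (PP q n (n - 1) * gg q n (n - 1) * FF q n (n - 1)) := by
  have hP : PP q n n = PP q n (n - 1) * gg q n (n - 1) := by
    have h := PP_succ (q := q) (n := n) (n - 1)
    rwa [show n - 1 + 1 = n by omega] at h
  have hQ : PP q n n = gg q n 0 * QQ q n (n - 1) := by
    have h := gg0_mul_QQ (q := q) (n := n) (n - 1)
    rw [show n - 1 + 1 = n by omega] at h
    exact h.symm
  have h1 : gg q n 0 * PP q n n * PP q n (n - 1) = PP q n n * PP q n n := by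
    rw [mul_assoc, PPn_mul_PP (n - 1) (by omega), ← mul_assoc, ← hQ]
  calc gg q n 0 * PP q n n
      = gg q n 0 * PP q n n * (PP q n (n - 1) * FF q n (n - 1)) := by
        rw [(FF_mul_PP hq (n - 1) (by omega)).2, mul_one]
    _ = gg q n 0 * PP q n n * PP q n (n - 1) * FF q n (n - 1) := by
        rw [← mul_assoc]
    _ = PP q n n * PP q n n * FF q n (n - 1) := by rw [h1]
    _ = PP q n n * (PP q n (n - 1) * gg q n (n - 1)) * FF q n (n - 1) := by
        nth_rewrite 2 [hP]; rfl
    _ = PP q n n * (PP q n (n - 1) * gg q n (n - 1) * FF q n (n - 1)) := by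
        rw [mul_assoc]

/-- The key conjugation identity used for `E ∘ F = ι ∘ E`. -/
lemma idStar (hq : IsUnit q) (hn : 2 ≤ n) :
    gg q n (n - 1) * (PP q n (n - 1) * gg q n (n - 1) * FF q n (n - 1)) * VV q n (n - 1) =
      PP q n (n - 2) * gg q n (n - 2) * FF q n (n - 2) := by
  set a := n - 1 with ha
  set b := n - 2 with hb
  have hP : PP q n a = PP q n b * gg q n b := by
    have h := PP_succ (q := q) (n := n) b
    rwa [show b + 1 = a by omega] at h
  have hF : FF q n a = VV q n b * FF q n b := by
    have h := FF_succ (q := q) (n := n) b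
    rwa [show b + 1 = a by omega] at h
  have hcP : Commute (gg q n a) (PP q n b) :=
    commute_PP fun j hj => gcomm (by omega : j + 2 ≤ a)
  have hcF : Commute (gg q n a) (FF q n b) :=
    commute_FF fun j hj => gvcomm (by omega : j + 2 ≤ a)
  have hbr : gg q n a * gg q n b * gg q n a = gg q n b * gg q n a * gg q n b := by
    have h := gbraid (q := q) (n := n) (i := b) (by omega : b + 1 < n)
    rw [show b + 1 = a by omega] at h
    exact h.symm
  rw [hP, hF]
  simp only [mul_assoc]
  rw [← mul_assoc (gg q n a) (PP q n b), hcP.eq, mul_assoc]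
  have hbr2 : ∀ X, gg q n a * (gg q n b * (gg q n a * X)) =
      gg q n b * (gg q n a * (gg q n b * X)) := by
    intro X
    simp only [← mul_assoc]
    rw [hbr]
  rw [hbr2]
  have hgv : ∀ Y, gg q n b * (VV q n b * Y) = Y := by
    intro Y
    rw [← mul_assoc, gg_mul_VV hq b (by omega), one_mul]
  rw [hgv]
  rw [← mul_assoc (gg q n a) (FF q n b), hcF.eq, mul_assoc,
    gg_mul_VV hq a (by omega), mul_one]

end words


end AffineTL


namespace AffineTL

/-- `F` is the canonical homomorphism `F_m : TLhat_m(q) → TLhat_{m+1}(q)`: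
`t_{σ_i} ↦ g_{σ_i}` for `1 ≤ i ≤ m−1` and `t_{a_m} ↦ g_{σ_m}·g_{a_{m+1}}·g_{σ_m}⁻¹`. -/
def isF {K : Type*} [CommRing K] (q : K) (m : ℕ) (hm : 2 ≤ m)
    (F : ATL K q m →ₐ[K] ATL K q (m + 1)) : Prop :=
  (∀ i : ℕ, ∀ hi : i < m - 1,
      F (g q m ⟨i, by omega⟩) = g q (m + 1) ⟨i, by omega⟩) ∧
  F (g q m ⟨m - 1, by omega⟩) =
    g q (m + 1) ⟨m - 1, by omega⟩ * g q (m + 1) ⟨m, by omega⟩ *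
      qinv q (g q (m + 1) ⟨m - 1, by omega⟩)

end AffineTL

namespace AffineTL

/-- `E` is the canonical surjection `E_n : TLhat_{n+1}(q) → TL_n(q)`:
`g_{σ_i} ↦ g_{σ_i}` for `1 ≤ i ≤ n` and
`g_{a_{n+1}} ↦ g_{σ_1}⋯g_{σ_{n−1}}·g_{σ_n}·g_{σ_{n−1}}⁻¹⋯g_{σ_1}⁻¹`. -/
def isE {K : Type*} [CommRing K] (q : K) (n : ℕ) (hn : 1 ≤ n)
    (E : ATL K q (n + 1) →ₐ[K] TLA K q n) : Prop :=
  (∀ i : Fin n, E (g q (n + 1) i.castSucc) = gA q n i) ∧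
  E (g q (n + 1) (Fin.last n)) =
    (List.ofFn fun j : Fin (n - 1) => gA q n ⟨j.val, by omega⟩).prod *
      gA q n ⟨n - 1, by omega⟩ *
      (List.ofFn fun j : Fin (n - 1) => qinv q (gA q n ⟨n - 2 - j.val, by omega⟩)).prod

end AffineTL

namespace AffineTL

variable {K : Type*} [CommRing K]

section bridge

variable {q : K} {n : ℕ}

lemma isE_gen {hn : 1 ≤ n} {Emap : ATL K q (n + 1) →ₐ[K] TLA K q n}
    (hEe : isE q n hn Emap) {k : ℕ} (hk : k < n) (hk' : k < n + 1) :
    Emap (g q (n + 1) ⟨k, hk'⟩) = gg q n k := by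
  rw [gg_of_lt hk]
  exact hEe.1 ⟨k, hk⟩

lemma isE_last (hn : 1 ≤ n) {Emap : ATL K q (n + 1) →ₐ[K] TLA K q n}
    (hEe : isE q n hn Emap) :
    Emap (g q (n + 1) (Fin.last n)) =
      PP q n (n - 1) * gg q n (n - 1) * FF q n (n - 1) := by
  rw [hEe.2]
  have e1 : (List.ofFn fun j : Fin (n - 1) => gA q n ⟨j.val, by omega⟩) =
      List.ofFn fun j : Fin (n - 1) => gg q n j.val := by
    refine congrArg List.ofFn (funext fun j => ?_)
    rw [gg_of_lt (show j.val < n by omega)]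
  have e2 : gA q n ⟨n - 1, by omega⟩ = gg q n (n - 1) := by
    rw [gg_of_lt (show n - 1 < n by omega)]
  have e3 : (List.ofFn fun j : Fin (n - 1) => qinv q (gA q n ⟨n - 2 - j.val, by omega⟩)) =
      List.ofFn fun j : Fin (n - 1) => VV q n (n - 1 - 1 - j.val) := by
    refine congrArg List.ofFn (funext fun j => ?_)
    rw [VV_of_lt (show n - 1 - 1 - j.val < n by omega)]
    have e4 : (⟨n - 2 - j.val, by omega⟩ : Fin n) = ⟨n - 1 - 1 - j.val, by omega⟩ := by
      refine Fin.ext ?_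
      show n - 2 - j.val = n - 1 - 1 - j.val
      omega
    rw [e4]
  rw [e1, e2, e3]
  rfl

lemma gA_last_eq (m : ℕ) (h : m < m + 1) : gA q (m + 1) ⟨m, h⟩ = gA q (m + 1) (Fin.last m) :=
  rfl

lemma gg_last {m : ℕ} : gg q (m + 1) m = gA q (m + 1) (Fin.last m) := by
  rw [gg_of_lt (Nat.lt_succ_self m)]
  exact congrArg _ (Fin.ext rfl)

lemma qinv_gg {k : ℕ} (hk : k < n) : qinv q (gg q n k) = VV q n k := by
  rw [gg_of_lt hk, VV_of_lt hk]

section iota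

variable {m : ℕ} (ιm : TLA K q m →ₐ[K] TLA K q (m + 1))

lemma iota_gg (hι : ∀ i : Fin m, ιm (gA q m i) = gA q (m + 1) i.castSucc)
    {k : ℕ} (hk : k < m) : ιm (gg q m k) = gg q (m + 1) k := by
  rw [gg_of_lt hk, hι ⟨k, hk⟩, gg_of_lt (show k < m + 1 by omega)]
  rfl

lemma iota_VV (hι : ∀ i : Fin m, ιm (gA q m i) = gA q (m + 1) i.castSucc)
    {k : ℕ} (hk : k < m) : ιm (VV q m k) = VV q (m + 1) k := by
  rw [VV_of_lt hk, map_qinv, hι ⟨k, hk⟩, VV_of_lt (show k < m + 1 by omega)]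
  rfl

lemma iota_PP (hι : ∀ i : Fin m, ιm (gA q m i) = gA q (m + 1) i.castSucc) :
    ∀ k : ℕ, k ≤ m → ιm (PP q m k) = PP q (m + 1) k := by
  intro k
  induction k with
  | zero => intro _; rw [PP_zero, PP_zero, map_one]
  | succ k ih =>
    intro hk
    rw [PP_succ, map_mul, ih (by omega), iota_gg ιm hι (by omega), ← PP_succ]

lemma iota_FF (hι : ∀ i : Fin m, ιm (gA q m i) = gA q (m + 1) i.castSucc) :
    ∀ k : ℕ, k ≤ m → ιm (FF q m k) = FF q (m + 1) k := by
  intro k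
  induction k with
  | zero => intro _; rw [FF_zero, FF_zero, map_one]
  | succ k ih =>
    intro hk
    rw [FF_succ, map_mul, ih (by omega), iota_VV ιm hι (by omega), ← FF_succ]

end iota

/-- The key compatibility `E_{m+1} ∘ F_{m+1} = ι_m ∘ E_m`. -/
lemma EF_comp {m : ℕ} (hm : 1 ≤ m) (hq : IsUnit q)
    (Fmap : ATL K q (m + 1) →ₐ[K] ATL K q (m + 2))
    (E1 : ATL K q (m + 2) →ₐ[K] TLA K q (m + 1))
    (E0 : ATL K q (m + 1) →ₐ[K] TLA K q m)
    (ιm : TLA K q m →ₐ[K] TLA K q (m + 1))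
    (hFf : isF q (m + 1) (by omega) Fmap)
    (hE1 : isE q (m + 1) (by omega) E1)
    (hE0 : isE q m hm E0)
    (hι : ∀ i : Fin m, ιm (gA q m i) = gA q (m + 1) i.castSucc) :
    ∀ x : ATL K q (m + 1), E1 (Fmap x) = ιm (E0 x) := by
  refine atl_ind q (m + 1) ?_ ?_ ?_ ?_
  · intro c
    rw [AlgHom.commutes, AlgHom.commutes, AlgHom.commutes, AlgHom.commutes]
  · intro i
    rcases Nat.lt_or_ge i.val m with hi | hi
    · have h1 := hFf.1 i.val (show i.val < (m + 1) - 1 by omega)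
      have hieq : g q (m + 1) i = g q (m + 1) ⟨i.val, by omega⟩ := rfl
      rw [hieq, h1, isE_gen hE1 (show i.val < m + 1 by omega),
        isE_gen hE0 hi, iota_gg ιm hι hi]
    · have hiv : i.val = m := by have := i.isLt; omega
      have him : g q (m + 1) i = g q (m + 1) ⟨m, by omega⟩ := by
        rw [show i = (⟨m, by omega⟩ : Fin (m + 1)) from Fin.ext hiv]
      have h2 := hFf.2
      simp only [Nat.add_sub_cancel] at h2
      rw [him, h2, map_mul, map_mul, map_qinv]
      have hl := isE_last (show 1 ≤ m + 1 by omega) hE1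
      simp only [Nat.add_sub_cancel] at hl
      rw [show Fin.last (m + 1) = (⟨m + 1, by omega⟩ : Fin (m + 2)) from rfl] at hl
      rw [isE_gen hE1 (show m < m + 1 by omega), hl,
        qinv_gg (show m < m + 1 by omega)]
      have hst := idStar (q := q) (n := m + 1) hq (by omega)
      simp only [Nat.add_sub_cancel, show m + 1 - 2 = m - 1 by omega] at hst
      rw [hst]
      have hl0 := isE_last hm hE0
      rw [show Fin.last m = (⟨m, by omega⟩ : Fin (m + 1)) from rfl] at hl0
      rw [hl0, map_mul, map_mul, iota_PP ιm hι (m - 1) (by omega),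
        iota_gg ιm hι (show m - 1 < m by omega), iota_FF ιm hι (m - 1) (by omega)]
  · intro x y hx hy
    rw [map_add, map_add, map_add, map_add, hx, hy]
  · intro x y hx hy
    rw [map_mul, map_mul, map_mul, map_mul, hx, hy]

end bridge

end AffineTL


open AffineTL in
/-- Proposition 5.2.4: composing a Jones–Markov trace `(τ_{n+1})` on the tower
`(TL_n(q))` with the surjections `E_n` yields a family `ρ_{n+1} := τ_{n+1} ∘ E_n` (here
indexed by `ρ m := τ m ∘ E m` on `TLhat_{m+1}(q)`) satisfying the affine Markov conditions
and invariant under the Dynkin automorphisms. -/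
theorem statement13 {K : Type*} [CommRing K] [IsDomain K] [CharZero K]
    (q sq : K) (hsq : sq * sq = q) (hq : IsUnit q) (hq1 : IsUnit (q + 1)) (hqne : q ≠ 1)
    -- the homomorphisms `F_m : TLhat_m(q) → TLhat_{m+1}(q)`
    (F : ∀ m : ℕ, ATL K q m →ₐ[K] ATL K q (m + 1))
    (hF : ∀ m : ℕ, ∀ hm : 2 ≤ m, isF q m hm (F m))
    -- the surjections `E_m : TLhat_{m+1}(q) → TL_m(q)`
    (E : ∀ m : ℕ, ATL K q (m + 1) →ₐ[K] TLA K q m)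
    (hE : ∀ m : ℕ, ∀ hm : 1 ≤ m, isE q m hm (E m))
    -- the Dynkin automorphisms `ψ_m`
    (ψ : ∀ m : ℕ, ATL K q m ≃ₐ[K] ATL K q m)
    (hψ : ∀ m : ℕ, ∀ i : Fin m, (ψ m) (g q m i) = g q m (csucc i))
    -- a Jones–Markov trace `(τ_{n+1})_{n ≥ 0}`, `τ m` being the trace on `TL_m(q)`
    (τ : ∀ m : ℕ, TLA K q m →ₗ[K] K)
    (htr : ∀ m, IsTrace (τ m)) (hτ1 : τ 0 1 = 1)
    (ι : ∀ m : ℕ, TLA K q m →ₐ[K] TLA K q (m + 1))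
    (hι : ∀ m : ℕ, ∀ i : Fin m, ι m (gA q m i) = gA q (m + 1) i.castSucc)
    (hτM : ∀ m : ℕ, ∀ h : TLA K q m,
      τ (m + 1) (ι m h * (sq • gA q (m + 1) (Fin.last m))) = τ m h)
    (hτM' : ∀ m : ℕ, ∀ h : TLA K q m,
      τ (m + 1) (ι m h * (Ring.inverse sq • qinv q (gA q (m + 1) (Fin.last m)))) = τ m h) :
    -- `ρ_{n+1}(F_n(h)·T_{σ_n}^{±1}) = ρ_n(h)`
    (∀ m : ℕ, ∀ h : ATL K q (m + 1),
      ((τ (m + 1)).comp (E (m + 1)).toLinearMap)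
          (F (m + 1) h * (sq • g q (m + 2) ⟨m, by omega⟩)) =
        ((τ m).comp (E m).toLinearMap) h) ∧
    (∀ m : ℕ, ∀ h : ATL K q (m + 1),
      ((τ (m + 1)).comp (E (m + 1)).toLinearMap)
          (F (m + 1) h * (Ring.inverse sq • qinv q (g q (m + 2) ⟨m, by omega⟩))) =
        ((τ m).comp (E m).toLinearMap) h) ∧
    -- each `ρ_n` is invariant under the Dynkin automorphism `ψ_n`
    (∀ m : ℕ, ∀ x : ATL K q (m + 1),
      ((τ m).comp (E m).toLinearMap) (ψ (m + 1) x) =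
        ((τ m).comp (E m).toLinearMap) x) := by
  refine ⟨?_, ?_, ?_⟩
  · -- Markov condition for `T`
    intro m h
    rcases Nat.eq_zero_or_pos m with rfl | hm
    · obtain ⟨c, rfl⟩ := atl_one_scalar q h
      simp only [LinearMap.coe_comp, Function.comp_apply, AlgHom.toLinearMap_apply]
      have e0 : F 1 ((algebraMap K (ATL K q 1)) c) = algebraMap K (ATL K q 2) c :=
        AlgHom.commutes _ c
      rw [e0, map_mul, map_smul]
      have e1 : E 1 ((algebraMap K (ATL K q 2)) c) = algebraMap K (TLA K q 1) c :=
        AlgHom.commutes _ c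
      rw [e1, isE_gen (hE 1 le_rfl) (show (0:ℕ) < 1 by omega)]
      have e2 : gg q 1 0 = gA q 1 (Fin.last 0) := gg_last
      have e3 : (algebraMap K (TLA K q 1)) c = ι 0 ((algebraMap K (TLA K q 0)) c) :=
        (AlgHom.commutes _ c).symm
      rw [e2, e3, hτM 0, AlgHom.commutes]
    · simp only [LinearMap.coe_comp, Function.comp_apply, AlgHom.toLinearMap_apply]
      rw [map_mul, map_smul,
        EF_comp hm hq (F (m + 1)) (E (m + 1)) (E m) (ι m) (hF (m + 1) (by omega))
          (hE (m + 1) (by omega)) (hE m hm) (hι m) h,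
        isE_gen (hE (m + 1) (by omega)) (show m < m + 1 by omega),
        gg_last]
      exact hτM m (E m h)
  · -- Markov condition for `T⁻¹`
    intro m h
    rcases Nat.eq_zero_or_pos m with rfl | hm
    · obtain ⟨c, rfl⟩ := atl_one_scalar q h
      simp only [LinearMap.coe_comp, Function.comp_apply, AlgHom.toLinearMap_apply]
      have e0 : F 1 ((algebraMap K (ATL K q 1)) c) = algebraMap K (ATL K q 2) c :=
        AlgHom.commutes _ c
      rw [e0, map_mul, map_smul, map_qinv]
      have e1 : E 1 ((algebraMap K (ATL K q 2)) c) = algebraMap K (TLA K q 1) c :=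
        AlgHom.commutes _ c
      rw [e1, isE_gen (hE 1 le_rfl) (show (0:ℕ) < 1 by omega)]
      have e2 : gg q 1 0 = gA q 1 (Fin.last 0) := gg_last
      have e3 : (algebraMap K (TLA K q 1)) c = ι 0 ((algebraMap K (TLA K q 0)) c) :=
        (AlgHom.commutes _ c).symm
      rw [e2, e3, hτM' 0, AlgHom.commutes]
    · simp only [LinearMap.coe_comp, Function.comp_apply, AlgHom.toLinearMap_apply]
      rw [map_mul, map_smul, map_qinv,
        EF_comp hm hq (F (m + 1)) (E (m + 1)) (E m) (ι m) (hF (m + 1) (by omega))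
          (hE (m + 1) (by omega)) (hE m hm) (hι m) h,
        isE_gen (hE (m + 1) (by omega)) (show m < m + 1 by omega),
        gg_last]
      exact hτM' m (E m h)
  · -- invariance under the Dynkin automorphism
    intro m x
    rcases Nat.eq_zero_or_pos m with rfl | hm
    · obtain ⟨c, rfl⟩ := atl_one_scalar q x
      rw [AlgEquiv.commutes]
    · simp only [LinearMap.coe_comp, Function.comp_apply, AlgHom.toLinearMap_apply]
      have hDF := FF_mul_PP (q := q) (n := m) hq m le_rfl
      have hkey : ∀ y : ATL K q (m + 1),
          E m (ψ (m + 1) y) * PP q m m = PP q m m * E m y := by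
        refine atl_ind q (m + 1) ?_ ?_ ?_ ?_
        · intro c
          rw [AlgEquiv.commutes, AlgHom.commutes]
          exact (Algebra.commutes c _)
        · intro i
          rw [hψ (m + 1) i]
          rcases Nat.lt_or_ge (i.val + 2) (m + 1) with hlt | hge
          · have hcs : csucc i = (⟨i.val + 1, by omega⟩ : Fin (m + 1)) := by
              refine Fin.ext ?_
              show (i.val + 1) % (m + 1) = i.val + 1
              exact Nat.mod_eq_of_lt (by omega)
            rw [hcs, isE_gen (hE m hm) (show i.val + 1 < m by omega),
              show g q (m + 1) i = g q (m + 1) ⟨i.val, i.isLt⟩ from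
                congrArg _ (Fin.ext rfl),
              isE_gen (hE m hm) (show i.val < m by omega)]
            exact rot m i.val (by omega) le_rfl
          · rcases Nat.lt_or_ge i.val m with h2 | h3
            · have hcs : csucc i = Fin.last m := by
                refine Fin.ext ?_
                show (i.val + 1) % (m + 1) = m
                rw [Nat.mod_eq_of_lt (by omega)]
                omega
              rw [hcs, isE_last hm (hE m hm),
                show g q (m + 1) i = g q (m + 1) ⟨m - 1, by omega⟩ from
                  congrArg _ (Fin.ext (show (i : ℕ) = m - 1 by omega)),
                isE_gen (hE m hm) (show m - 1 < m by omega)]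
              exact idI2 hq hm
            · have hcs : csucc i = (⟨0, by omega⟩ : Fin (m + 1)) := by
                refine Fin.ext ?_
                show (i.val + 1) % (m + 1) = 0
                have hiv : i.val = m := by have := i.isLt; omega
                rw [hiv, Nat.mod_self]
              rw [hcs, isE_gen (hE m hm) (show 0 < m by omega),
                show g q (m + 1) i = g q (m + 1) (Fin.last m) from
                  congrArg _ (Fin.ext (show (i : ℕ) = m by omega)),
                isE_last hm (hE m hm)]
              exact idI3 hq hm
        · intro a b ha hb
          rw [map_add, map_add, map_add, add_mul, mul_add, ha, hb]
        · intro a b ha hb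
          rw [map_mul, map_mul, map_mul, mul_assoc, hb, ← mul_assoc, ha, mul_assoc]
      calc τ m (E m (ψ (m + 1) x))
          = τ m (E m (ψ (m + 1) x) * (PP q m m * FF q m m)) := by rw [hDF.2, mul_one]
        _ = τ m ((E m (ψ (m + 1) x) * PP q m m) * FF q m m) := by rw [mul_assoc]
        _ = τ m (FF q m m * (E m (ψ (m + 1) x) * PP q m m)) := htr m _ _
        _ = τ m (FF q m m * (PP q m m * E m x)) := by rw [hkey]
        _ = τ m ((FF q m m * PP q m m) * E m x) := by rw [mul_assoc]
        _ = τ m (E m x) := by rw [hDF.1, one_mul]
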